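/- Let a be a root of 6a³ − 18a² + 9a − 1 = 0, u = a(γ−1)+1 ≠ 0, a ≠ 0, and define p₂, p₃, p₄, p₅ as above. Then a·(a·p₂ + 3a·p₃ + (2−a)·p₄ + 3(2aγ+1)·p₅) = 1/6. -/

import Mathlib

theorem third_order_condition (a γ u : ℝ) (hu : u = a*(γ-1)+1) (hu0 : u ≠ 0)
    (ha0 : a ≠ 0) (ha : 6*a^3 - 18*a^2 + 9*a - 1 = 0) :
    a*(a*((2*a^2*(7*γ-1) - a*(7*γ-3) + γ)/(6*a*u))
      + 3*a*((-2*a^2*(8*γ+1) + a*(13*γ+1) - 2*γ)/(6*a*u))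
      + (2-a)*((-6*a^2 + 2*a*(γ+5) - 1)/(6*u))
      + 3*(2*a*γ+1)*((2*a^2 - 4*a + 1)/(2*u))) = 1/6 := by
  subst hu
  field_simp
  linear_combination (12*a*γ + 2*a + 2)*ha
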